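/- For every integer j ≥ 1, the equality of rational numbers Σ_{k=1}^{j} (1/2)_{k−1}·(1/2 + j)_{j−k} / ((k−1)!·(j−k)!) = (2j−1)!!·2^{j−1}/j! holds. -/

import Mathlib

open Polynomial Finset

lemma desc_smeval_eq_eval (q : ℚ) (k : ℕ) :
    (descPochhammer ℤ k).smeval q = (descPochhammer ℚ k).eval q := by
  induction k with
  | zero => simp [descPochhammer_zero, smeval_one]
  | succ n ih =>
      rw [descPochhammer_succ_right, smeval_mul, ih, descPochhammer_succ_right, eval_mul]
      congr 1
      simp [smeval_sub, smeval_X, smeval_natCast]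

lemma asc_eval_neg (q : ℚ) (k : ℕ) :
    (ascPochhammer ℚ k).eval q = (-1) ^ k * (descPochhammer ℚ k).eval (-q) := by
  induction k with
  | zero => simp
  | succ n ih =>
      rw [ascPochhammer_succ_eval, descPochhammer_succ_eval, ih, pow_succ]
      ring

lemma asc_vandermonde (x y : ℚ) (n : ℕ) :
    (ascPochhammer ℚ n).eval (x + y) =
      ∑ i ∈ range (n + 1), (n.choose i : ℚ) *
        ((ascPochhammer ℚ i).eval x * (ascPochhammer ℚ (n - i)).eval y) := by
  have h := Ring.descPochhammer_smeval_add (R := ℚ) (r := -x) (s := -y) n (Commute.all _ _)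
  rw [Finset.Nat.sum_antidiagonal_eq_sum_range_succ_mk] at h
  simp only [desc_smeval_eq_eval] at h
  rw [asc_eval_neg, neg_add, h, Finset.mul_sum]
  refine Finset.sum_congr rfl fun i hi => ?_
  rw [Finset.mem_range, Nat.lt_succ_iff] at hi
  rw [asc_eval_neg x, asc_eval_neg y]
  have : (-1 : ℚ) ^ n = (-1) ^ i * (-1) ^ (n - i) := by
    rw [← pow_add, Nat.add_sub_cancel' hi]
  rw [this]; ring

theorem sum_pochhammer_eq (j : ℕ) (hj : 1 ≤ j) :
    ∑ k ∈ Finset.Icc 1 j,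
        (ascPochhammer ℚ (k - 1)).eval (1 / 2) * (ascPochhammer ℚ (j - k)).eval (1 / 2 + (j : ℚ))
          / (((k - 1).factorial : ℚ) * ((j - k).factorial : ℚ))
      = (Nat.doubleFactorial (2 * j - 1) : ℚ) * 2 ^ (j - 1) / (j.factorial : ℚ) := by
  obtain ⟨m, rfl⟩ : ∃ m, j = m + 1 := ⟨j - 1, (Nat.succ_pred_eq_of_pos hj).symm⟩
  have hIcc : Finset.Icc 1 (m + 1) = Finset.Ico 1 (m + 2) := by
    exact (Finset.Ico_add_one_right_eq_Icc 1 (m + 1)).symm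
  rw [hIcc, Finset.sum_Ico_eq_sum_range]
  simp only [Nat.add_sub_cancel_left, show m + 2 - 1 = m + 1 from rfl,
    Nat.add_sub_cancel, Nat.succ_sub_succ]
  have key : ∀ i ∈ range (m + 1),
      (ascPochhammer ℚ i).eval (1 / 2) * (ascPochhammer ℚ (m - i)).eval (1 / 2 + ((m : ℚ) + 1))
          / ((i.factorial : ℚ) * ((m - i).factorial : ℚ))
        = (m.choose i : ℚ) * ((ascPochhammer ℚ i).eval (1 / 2) *
            (ascPochhammer ℚ (m - i)).eval (1 / 2 + ((m : ℚ) + 1))) / (m.factorial : ℚ) := by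
    intro i hi
    rw [Finset.mem_range, Nat.lt_succ_iff] at hi
    have h := Nat.choose_mul_factorial_mul_factorial hi
    have h2 : ((m.choose i : ℚ) * i.factorial * (m - i).factorial) = (m.factorial : ℚ) := by
      exact_mod_cast congrArg (Nat.cast : ℕ → ℚ) h
    rw [eq_div_iff (by exact_mod_cast m.factorial_ne_zero), div_mul_eq_mul_div,
      div_eq_iff (by positivity), ← h2]
    ring
  push_cast
  have hx : ∀ x, m + 1 - (1 + x) = m - x := fun x => by omega
  simp only [hx, Nat.sub_zero]
  rw [Finset.sum_congr rfl key, ← Finset.sum_div, ← asc_vandermonde (1/2) (1/2 + ((m:ℚ)+1)) m]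
  have harg : (1/2 : ℚ) + (1/2 + ((m:ℚ)+1)) = ((m + 2 : ℕ) : ℚ) := by push_cast; ring
  rw [harg, ← ascPochhammer_eval_cast, ascPochhammer_nat_eq_ascFactorial]
  have h21 : 2 * (m + 1) - 1 = 2 * m + 1 := by omega
  rw [h21, div_eq_div_iff (Nat.cast_ne_zero.mpr m.factorial_ne_zero)
    (Nat.cast_ne_zero.mpr (m+1).factorial_ne_zero)]
  have hnat : (m + 2).ascFactorial m * (m + 1).factorial
      = (2 * m + 1).doubleFactorial * 2 ^ m * m.factorial := by
    have h1 : (m + 1).factorial * (m + 2).ascFactorial m = (m + 1 + m).factorial :=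
      Nat.factorial_mul_ascFactorial (m + 1) m
    have h2 : (2 * m + 1).factorial = (2 * m + 1).doubleFactorial * (2 * m).doubleFactorial :=
      Nat.factorial_eq_mul_doubleFactorial (2 * m)
    have h3 : (2 * m).doubleFactorial = 2 ^ m * m.factorial := Nat.doubleFactorial_two_mul m
    have h4 : m + 1 + m = 2 * m + 1 := by omega
    rw [mul_comm, h1, h4, h2, h3, mul_assoc]
  exact_mod_cast hnat
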